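/- For every δ > 0 there exists ε₀ > 0 such that for every ε with 0 < ε ≤ ε₀ the following holds. Let G be a finite simple graph with edge weights w : E(G) → ℝ satisfying w(e) ≥ 1 for all edges e, let L ∈ ℕ be such that w(e) < (1+ε)^L for all edges e, and for i = 0, …, L−1 let E_i = {e ∈ E(G) : w(e) ≥ (1+ε)^i} and let C_i be a maximal matching of the graph (V(G), E_i). Let T be the set produced by the greedy procedure applied to the concatenated list of the edges of C_{L−1}, then C_{L−2}, and so on down to C_0. Then T is a matching of G, and for every matching M of G one has w(M) ≤ (4+δ)·w(T), i.e., T is a (4+ε)-approximation of the maximum weighted matching of G. -/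

import Mathlib

/-- Two edges (as unordered pairs of vertices) share an endpoint. -/
def Shares {V : Type*} (e f : Sym2 V) : Prop := ∃ v, v ∈ e ∧ v ∈ f

/-- `M` is a matching whose edges are drawn from the edge set `E`:
no two distinct edges of `M` share an endpoint. -/
def IsMatchingOf {V : Type*} (E : Set (Sym2 V)) (M : Finset (Sym2 V)) : Prop :=
  (∀ e ∈ M, e ∈ E) ∧ ∀ e ∈ M, ∀ f ∈ M, e ≠ f → ¬ Shares e f

/-- `M` is a maximal matching of the edge set `E`: every edge of `E` not in `M`
shares an endpoint with some edge of `M`. -/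
def IsMaximalMatchingOf {V : Type*} (E : Set (Sym2 V)) (M : Finset (Sym2 V)) : Prop :=
  IsMatchingOf E M ∧ ∀ e ∈ E, e ∉ M → ∃ f ∈ M, Shares e f

open scoped Classical in
/-- The greedy procedure: process the edges of the list `l` in order, starting from `∅`,
and add an edge to the current set `T` iff neither of its endpoints is an endpoint of an
edge already in `T`. -/
noncomputable def greedy {V : Type*} (l : List (Sym2 V)) : Finset (Sym2 V) :=
  l.foldl (fun T e => if ∀ f ∈ T, ¬ Shares e f then insert e T else T) ∅

/-- The concatenated list of the edges of `C (L-1)`, then `C (L-2)`, …, down to `C 0`. -/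
noncomputable def concatDesc {V : Type*} (C : ℕ → Finset (Sym2 V)) (L : ℕ) :
    List (Sym2 V) :=
  (List.range L).reverse.flatMap fun i => (C i).toList

section Aux
variable {V : Type*}

lemma shares_self (e : Sym2 V) : Shares e e := ⟨e.out.1, e.out_fst_mem, e.out_fst_mem⟩

lemma shares_symm {e f : Sym2 V} (h : Shares e f) : Shares f e := by
  obtain ⟨v, h1, h2⟩ := h; exact ⟨v, h2, h1⟩

open scoped Classical in
/-- The greedy procedure with a general starting accumulator. -/
noncomputable def gfold (T : Finset (Sym2 V)) (l : List (Sym2 V)) : Finset (Sym2 V) :=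
  l.foldl (fun T e => if ∀ f ∈ T, ¬ Shares e f then insert e T else T) T

lemma greedy_eq_gfold (l : List (Sym2 V)) : greedy l = gfold ∅ l := rfl

open scoped Classical in
lemma gfold_cons (T : Finset (Sym2 V)) (e : Sym2 V) (l : List (Sym2 V)) :
    gfold T (e :: l) = gfold (if ∀ f ∈ T, ¬ Shares e f then insert e T else T) l := rfl

lemma gfold_append (T : Finset (Sym2 V)) (l₁ l₂ : List (Sym2 V)) :
    gfold T (l₁ ++ l₂) = gfold (gfold T l₁) l₂ := List.foldl_append ..

lemma subset_gfold (T : Finset (Sym2 V)) (l : List (Sym2 V)) : T ⊆ gfold T l := by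
  classical
  induction l generalizing T with
  | nil => exact fun x h => h
  | cons e l ih =>
    rw [gfold_cons]
    refine fun x hx => ih _ ?_
    split
    · exact Finset.mem_insert_of_mem hx
    · exact hx

lemma mem_gfold {T : Finset (Sym2 V)} {l : List (Sym2 V)} {a : Sym2 V}
    (h : a ∈ gfold T l) : a ∈ T ∨ a ∈ l := by
  classical
  induction l generalizing T with
  | nil => exact Or.inl h
  | cons e l ih =>
    rw [gfold_cons] at h
    rcases ih h with h' | h'
    · by_cases hc : ∀ f ∈ T, ¬ Shares e f
      · rw [if_pos hc] at h'
        rcases Finset.mem_insert.mp h' with rfl | h''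
        · exact Or.inr (List.mem_cons_self ..)
        · exact Or.inl h''
      · rw [if_neg hc] at h'
        exact Or.inl h'
    · exact Or.inr (List.mem_cons_of_mem _ h')

lemma gfold_matching {T : Finset (Sym2 V)} (l : List (Sym2 V))
    (hT : ∀ e ∈ T, ∀ f ∈ T, e ≠ f → ¬ Shares e f) :
    ∀ e ∈ gfold T l, ∀ f ∈ gfold T l, e ≠ f → ¬ Shares e f := by
  classical
  induction l generalizing T with
  | nil => exact hT
  | cons a l ih =>
    rw [gfold_cons]
    refine ih ?_
    split
    · rename_i hc
      intro e he f hf hef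
      rcases Finset.mem_insert.mp he with rfl | he' <;>
        rcases Finset.mem_insert.mp hf with rfl | hf'
      · exact absurd rfl hef
      · exact hc f hf'
      · exact fun hs => hc e he' (shares_symm hs)
      · exact hT e he' f hf' hef
    · exact hT

lemma gfold_blocked {T : Finset (Sym2 V)} {l : List (Sym2 V)} {e : Sym2 V}
    (h : e ∈ l) : ∃ g ∈ gfold T l, Shares e g := by
  classical
  induction l generalizing T with
  | nil => exact absurd h (List.not_mem_nil (a := e))
  | cons a l ih =>
    rw [gfold_cons]
    rcases List.mem_cons.mp h with rfl | h'
    · by_cases hc : ∀ f ∈ T, ¬ Shares e f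
      · rw [if_pos hc]
        exact ⟨e, subset_gfold _ _ (Finset.mem_insert_self ..), shares_self e⟩
      · rw [if_neg hc]
        push_neg at hc
        obtain ⟨f, hf, hs⟩ := hc
        exact ⟨f, subset_gfold _ _ hf, hs⟩
    · exact ih h'

lemma concatDesc_succ (C : ℕ → Finset (Sym2 V)) (L : ℕ) :
    concatDesc C (L + 1) = (C L).toList ++ concatDesc C L := by
  simp [concatDesc, List.range_succ]

lemma mem_concatDesc {C : ℕ → Finset (Sym2 V)} {L : ℕ} {e : Sym2 V} :
    e ∈ concatDesc C L ↔ ∃ i, i < L ∧ e ∈ C i := by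
  simp [concatDesc, List.mem_flatMap]

/-- Every edge of `C i` shares an endpoint with some edge of the greedy merge coming
from a level `j ≥ i`. -/
lemma gfold_key {C : ℕ → Finset (Sym2 V)} :
    ∀ (L : ℕ) (T₀ : Finset (Sym2 V)) (i : ℕ), i < L → ∀ f ∈ C i,
      ∃ g ∈ gfold T₀ (concatDesc C L), Shares f g ∧
        (g ∈ T₀ ∨ ∃ j, i ≤ j ∧ j < L ∧ g ∈ C j) := by
  intro L
  induction L with
  | zero => intro T₀ i hi; omega
  | succ L ih =>
    intro T₀ i hi f hf
    rw [concatDesc_succ, gfold_append]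
    rcases Nat.lt_succ_iff_lt_or_eq.mp hi with hi' | rfl
    · obtain ⟨g, hg, hs, hloc⟩ := ih (gfold T₀ (C L).toList) i hi' f hf
      refine ⟨g, hg, hs, ?_⟩
      rcases hloc with hg1 | ⟨j, hj1, hj2, hj3⟩
      · rcases mem_gfold hg1 with h0 | h0
        · exact Or.inl h0
        · exact Or.inr ⟨L, le_of_lt hi', by omega, Finset.mem_toList.mp h0⟩
      · exact Or.inr ⟨j, hj1, by omega, hj3⟩
    · obtain ⟨g, hg, hs⟩ := gfold_blocked (T := T₀) (Finset.mem_toList.mpr hf)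
      refine ⟨g, subset_gfold _ _ hg, hs, ?_⟩
      rcases mem_gfold hg with h0 | h0
      · exact Or.inl h0
      · exact Or.inr ⟨i, le_refl _, by omega, Finset.mem_toList.mp h0⟩

/-- A matching each of whose edges shares an endpoint with an edge of `B` has at most
`2 * B.card` edges. -/
lemma matching_card_le_two_mul {A B : Finset (Sym2 V)}
    (hA : ∀ a ∈ A, ∀ a' ∈ A, a ≠ a' → ¬ Shares a a')
    (h : ∀ a ∈ A, ∃ b ∈ B, Shares a b) : A.card ≤ 2 * B.card := by
  classical
  set S : Finset V := B.biUnion (fun b => {b.out.1, b.out.2}) with hS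
  have hmemS : ∀ b ∈ B, ∀ v, v ∈ b → v ∈ S := by
    intro b hb v hv
    refine Finset.mem_biUnion.2 ⟨b, hb, ?_⟩
    rcases (Sym2.mem_iff'.mp (by
      rw [show s(b.out.1, b.out.2) = b from by
        show Sym2.mk b.out.1 b.out.2 = b
        rw [Sym2.mk, Prod.mk.eta]; exact b.out_eq]
      exact hv)) with h1 | h1 <;> simp [h1]
  have hex : ∀ a ∈ A, ∃ v, v ∈ a ∧ v ∈ S := by
    intro a ha
    obtain ⟨b, hb, v, hv1, hv2⟩ := h a ha
    exact ⟨v, hv1, hmemS b hb v hv2⟩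
  have hcard : A.card ≤ S.card := by
    refine Finset.card_le_card_of_injOn
      (fun a => if hc : ∃ v, v ∈ a ∧ v ∈ S then hc.choose else a.out.1) ?_ ?_
    · intro a ha
      dsimp only
      rw [dif_pos (hex a ha)]
      exact (hex a ha).choose_spec.2
    · intro a ha a' ha' heq
      dsimp only at heq
      rw [dif_pos (hex a (by simpa using ha)), dif_pos (hex a' (by simpa using ha'))] at heq
      by_contra hne
      exact hA a (by simpa using ha) a' (by simpa using ha') hne
        ⟨_, (hex a (by simpa using ha)).choose_spec.1,
          heq ▸ (hex a' (by simpa using ha')).choose_spec.1⟩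
  refine hcard.trans ?_
  refine (Finset.card_biUnion_le).trans ?_
  calc ∑ b ∈ B, ({b.out.1, b.out.2} : Finset V).card
      ≤ ∑ _b ∈ B, 2 := by
        refine Finset.sum_le_sum fun b _ => ?_
        exact (Finset.card_insert_le _ _).trans (by simp)
    _ = 2 * B.card := by rw [Finset.sum_const, smul_eq_mul, mul_comm]

lemma exists_level {ε x : ℝ} (hε : 0 < ε) {L : ℕ} (h1 : 1 ≤ x) (h2 : x < (1 + ε) ^ L) :
    ∃ ℓ, ℓ < L ∧ (1 + ε) ^ ℓ ≤ x ∧ x < (1 + ε) ^ (ℓ + 1) := by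
  classical
  have hL : 1 ≤ L := by
    by_contra hL
    push_neg at hL
    interval_cases L
    simp at h2
    linarith
  set P : ℕ → Prop := fun i => (1 + ε) ^ i ≤ x with hP
  have hP0 : P 0 := by simpa [hP] using h1
  set ℓ := Nat.findGreatest P (L - 1) with hℓ
  have hPl : P ℓ := Nat.findGreatest_spec (Nat.zero_le _) hP0
  have hlL : ℓ < L := lt_of_le_of_lt (Nat.findGreatest_le _) (by omega)
  refine ⟨ℓ, hlL, hPl, ?_⟩
  by_cases hcase : ℓ + 1 ≤ L - 1
  · have := Nat.findGreatest_is_greatest (P := P) (n := L - 1) (k := ℓ + 1) (by omega) hcase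
    simpa [hP] using (not_le.mp (by simpa [hP] using this))
  · have : ℓ + 1 = L := by omega
    rw [this]; exact h2

lemma level_unique {ε x : ℝ} (hε : 0 < ε) {ℓ i : ℕ}
    (h1 : (1 + ε) ^ ℓ ≤ x) (h2 : x < (1 + ε) ^ (ℓ + 1)) :
    ((1 + ε) ^ i ≤ x ↔ i ≤ ℓ) := by
  have hb : (1 : ℝ) ≤ 1 + ε := by linarith
  constructor
  · intro h
    by_contra hi
    push_neg at hi
    have : (1 + ε) ^ (ℓ + 1) ≤ (1 + ε) ^ i := pow_le_pow_right₀ hb hi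
    linarith
  · intro h
    exact le_trans (pow_le_pow_right₀ hb h) h1

lemma ite_sum_eq {ε x : ℝ} (hε : 0 < ε) {L ℓ : ℕ} (hℓL : ℓ < L)
    (h1 : (1 + ε) ^ ℓ ≤ x) (h2 : x < (1 + ε) ^ (ℓ + 1)) :
    ∑ i ∈ Finset.range L, (if (1 + ε) ^ i ≤ x then ε * (1 + ε) ^ i else 0)
      = (1 + ε) ^ (ℓ + 1) - 1 := by
  classical
  rw [← Finset.sum_filter]
  have hfilt : (Finset.range L).filter (fun i => (1 + ε) ^ i ≤ x) = Finset.range (ℓ + 1) := by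
    ext i
    simp only [Finset.mem_filter, Finset.mem_range]
    rw [level_unique hε h1 h2]
    omega
  rw [hfilt, ← Finset.mul_sum]
  have := geom_sum_mul (1 + ε) (ℓ + 1)
  have he : (1 : ℝ) + ε - 1 = ε := by ring
  rw [he] at this
  linarith [this]

lemma expand_sum {S : Finset (Sym2 V)} {w : Sym2 V → ℝ} {L : ℕ} {ε : ℝ} :
    ∑ e ∈ S, (1 + ∑ i ∈ Finset.range L, (if (1 + ε) ^ i ≤ w e then ε * (1 + ε) ^ i else 0))
      = (S.card : ℝ) + ∑ i ∈ Finset.range L,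
          (ε * (1 + ε) ^ i) * ((S.filter (fun e => (1 + ε) ^ i ≤ w e)).card : ℝ) := by
  classical
  rw [Finset.sum_add_distrib]
  congr 1
  · simp
  · rw [Finset.sum_comm]
    refine Finset.sum_congr rfl fun i _ => ?_
    rw [← Finset.sum_filter, Finset.sum_const, nsmul_eq_mul, mul_comm]

end Aux

/-- **The Crouch–Stubbs `(4+ε)`-approximation.**  For every `δ > 0` there is `ε₀ > 0`
such that for all `0 < ε ≤ ε₀` the following holds.  Let `G` be a finite simple graph
with edge weights `w(e) ≥ 1`, let `L` satisfy `w(e) < (1+ε)^L` for all edges, let `C i`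
be a maximal matching of the substream `E_i = {e ∈ E(G) : w(e) ≥ (1+ε)^i}` for each
`i < L`, and let `T` be the greedy merge of `C (L-1), …, C 0`.  Then `T` is a matching
of `G` and `w(M) ≤ (4+δ) · w(T)` for every matching `M` of `G`. -/
theorem crouch_stubbs_approximation :
    ∀ δ : ℝ, 0 < δ → ∃ ε₀ : ℝ, 0 < ε₀ ∧ ∀ ε : ℝ, 0 < ε → ε ≤ ε₀ →
      ∀ (V : Type) [Fintype V] (G : SimpleGraph V) (w : Sym2 V → ℝ) (L : ℕ)
        (C : ℕ → Finset (Sym2 V)),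
        (∀ e ∈ G.edgeSet, 1 ≤ w e) →
        (∀ e ∈ G.edgeSet, w e < (1 + ε) ^ L) →
        (∀ i < L, IsMaximalMatchingOf {e | e ∈ G.edgeSet ∧ (1 + ε) ^ i ≤ w e} (C i)) →
        IsMatchingOf G.edgeSet (greedy (concatDesc C L)) ∧
        ∀ M : Finset (Sym2 V), IsMatchingOf G.edgeSet M →
          ∑ e ∈ M, w e ≤ (4 + δ) * ∑ e ∈ greedy (concatDesc C L), w e := by
  intro δ hδ
  refine ⟨δ / 4, by linarith, ?_⟩
  intro ε hε hεδ V _ G w L C hw1 hwL hC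
  classical
  rw [greedy_eq_gfold]
  set T := gfold (∅ : Finset (Sym2 V)) (concatDesc C L) with hTdef
  have hb1 : (1 : ℝ) ≤ 1 + ε := by linarith
  have hTloc : ∀ g ∈ T, ∃ i, i < L ∧ g ∈ C i := by
    intro g hg
    rcases mem_gfold hg with h | h
    · simp at h
    · exact mem_concatDesc.mp h
  have hCE : ∀ i, i < L → ∀ f ∈ C i, f ∈ G.edgeSet ∧ (1 + ε) ^ i ≤ w f :=
    fun i hi f hf => (hC i hi).1.1 f hf
  have hTedge : ∀ g ∈ T, g ∈ G.edgeSet := by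
    intro g hg
    obtain ⟨i, hi, hgi⟩ := hTloc g hg
    exact (hCE i hi g hgi).1
  have hTmatch : IsMatchingOf G.edgeSet T :=
    ⟨hTedge, gfold_matching _ (by simp)⟩
  refine ⟨hTmatch, ?_⟩
  intro M hM
  have hTw : ∀ g ∈ T, 1 ≤ w g := fun g hg => hw1 g (hTedge g hg)
  have hTnn : 0 ≤ ∑ e ∈ T, w e :=
    Finset.sum_nonneg fun g hg => le_trans zero_le_one (hTw g hg)
  by_cases hL : L = 0
  · subst hL
    have hM0 : M = ∅ := by
      by_contra h
      obtain ⟨e, he⟩ := Finset.nonempty_iff_ne_empty.mpr h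
      have h1 := hw1 e (hM.1 e he)
      have h2 := hwL e (hM.1 e he)
      simp at h2
      linarith
    rw [hM0]
    simp only [Finset.sum_empty]
    exact mul_nonneg (by linarith) hTnn
  · have hL0 : 0 < L := Nat.pos_of_ne_zero hL
    have key1 : ∀ i, i < L →
        (M.filter fun e => (1 + ε) ^ i ≤ w e).card ≤ 2 * (C i).card := by
      intro i hi
      refine matching_card_le_two_mul ?_ ?_
      · intro a ha a' ha' hne
        exact hM.2 a (Finset.mem_filter.mp ha).1 a' (Finset.mem_filter.mp ha').1 hne
      · intro a ha
        obtain ⟨haM, haw⟩ := Finset.mem_filter.mp ha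
        by_cases hain : a ∈ C i
        · exact ⟨a, hain, shares_self a⟩
        · exact (hC i hi).2 a ⟨hM.1 a haM, haw⟩ hain
    have key2 : ∀ i, i < L →
        (C i).card ≤ 2 * (T.filter fun g => (1 + ε) ^ i ≤ w g).card := by
      intro i hi
      refine matching_card_le_two_mul (hC i hi).1.2 ?_
      intro f hf
      obtain ⟨g, hg, hs, hloc⟩ := gfold_key L ∅ i hi f hf
      refine ⟨g, Finset.mem_filter.mpr ⟨hg, ?_⟩, hs⟩
      rcases hloc with h0 | ⟨j, hij, hjL, hgj⟩
      · simp at h0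
      · exact le_trans (pow_le_pow_right₀ hb1 hij) (hCE j hjL g hgj).2
    have hMfil : M.filter (fun e => (1 + ε) ^ (0 : ℕ) ≤ w e) = M := by
      refine Finset.filter_true_of_mem fun e he => ?_
      rw [pow_zero]
      exact hw1 e (hM.1 e he)
    have hTfil : T.filter (fun g => (1 + ε) ^ (0 : ℕ) ≤ w g) = T := by
      refine Finset.filter_true_of_mem fun g hg => ?_
      rw [pow_zero]
      exact hTw g hg
    have hMcard : (M.card : ℝ) ≤ 4 * (T.card : ℝ) := by
      have h1 := key1 0 hL0
      have h2 := key2 0 hL0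
      rw [hMfil] at h1
      rw [hTfil] at h2
      have : M.card ≤ 4 * T.card := by omega
      exact_mod_cast this
    calc ∑ e ∈ M, w e
        ≤ ∑ e ∈ M, (1 + ∑ i ∈ Finset.range L,
            (if (1 + ε) ^ i ≤ w e then ε * (1 + ε) ^ i else 0)) := by
          refine Finset.sum_le_sum fun e he => ?_
          obtain ⟨ℓ, hℓL, hl1, hl2⟩ :=
            exists_level hε (hw1 e (hM.1 e he)) (hwL e (hM.1 e he))
          rw [ite_sum_eq hε hℓL hl1 hl2]
          linarith
      _ = (M.card : ℝ) + ∑ i ∈ Finset.range L,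
            (ε * (1 + ε) ^ i) * ((M.filter (fun e => (1 + ε) ^ i ≤ w e)).card : ℝ) :=
          expand_sum
      _ ≤ 4 * (T.card : ℝ) + ∑ i ∈ Finset.range L,
            (ε * (1 + ε) ^ i) * (4 * ((T.filter (fun g => (1 + ε) ^ i ≤ w g)).card : ℝ)) := by
          refine add_le_add hMcard (Finset.sum_le_sum fun i hi => ?_)
          have hi' := Finset.mem_range.mp hi
          have h1 := key1 i hi'
          have h2 := key2 i hi'
          have hcoef : (0 : ℝ) ≤ ε * (1 + ε) ^ i := by positivity
          refine mul_le_mul_of_nonneg_left ?_ hcoef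
          have h3 : (M.filter (fun e => (1 + ε) ^ i ≤ w e)).card ≤
              4 * (T.filter (fun g => (1 + ε) ^ i ≤ w g)).card := by omega
          calc ((M.filter (fun e => (1 + ε) ^ i ≤ w e)).card : ℝ)
              ≤ ((4 * (T.filter (fun g => (1 + ε) ^ i ≤ w g)).card : ℕ) : ℝ) := by
                exact_mod_cast h3
            _ = 4 * ((T.filter (fun g => (1 + ε) ^ i ≤ w g)).card : ℝ) := by
                push_cast; ring
      _ = 4 * ((T.card : ℝ) + ∑ i ∈ Finset.range L,
            (ε * (1 + ε) ^ i) * ((T.filter (fun g => (1 + ε) ^ i ≤ w g)).card : ℝ)) := by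
          rw [mul_add, Finset.mul_sum]
          congr 1
          exact Finset.sum_congr rfl fun i _ => by ring
      _ = 4 * ∑ g ∈ T, (1 + ∑ i ∈ Finset.range L,
            (if (1 + ε) ^ i ≤ w g then ε * (1 + ε) ^ i else 0)) := by
          rw [expand_sum]
      _ ≤ 4 * ∑ g ∈ T, ((1 + ε) * w g) := by
          refine mul_le_mul_of_nonneg_left
            (Finset.sum_le_sum fun g hg => ?_) (by norm_num)
          obtain ⟨ℓ, hℓL, hl1, hl2⟩ :=
            exists_level hε (hTw g hg) (hwL g (hTedge g hg))
          rw [ite_sum_eq hε hℓL hl1 hl2]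
          have h3 : (1 + ε) ^ (ℓ + 1) ≤ (1 + ε) * w g := by
            rw [pow_succ]
            calc (1 + ε) ^ ℓ * (1 + ε) ≤ w g * (1 + ε) :=
                  mul_le_mul_of_nonneg_right hl1 (by linarith)
              _ = (1 + ε) * w g := mul_comm _ _
          linarith
      _ = 4 * (1 + ε) * ∑ g ∈ T, w g := by
          rw [← Finset.mul_sum]; ring
      _ ≤ (4 + δ) * ∑ g ∈ T, w g := by
          refine mul_le_mul_of_nonneg_right ?_ hTnn
          linarith
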